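/- Define D(0,0) as the constant term in ζ₁, ζ₂ of i η(τ)⁹ / (ϑ(z₁;τ)ϑ(z₂;τ)ϑ(z₁+z₂;τ)) in the region |q| < |ζ₁|, |ζ₂|, |ζ₁ζ₂| < 1. Then D(0,0) = Σ_{n≥1} n q^{n²}, assuming the decomposition D(r₁,r₂) = D₁(r₁,r₂) + D₂(r₁,r₂) with D₁(𝐫) = Σ_{n₁,n₂ ≥ 0} (n₁+2n₂-r₁) q^{n₁²+n₁n₂+n₂²-r₂n₁-r₁n₂} and D₂(𝐫) = Σ_{n₁,n₂ ≥ 0} (n₁-2n₂+r₁-r₂) q^{n₁²-n₁n₂+n₂²-r₂n₁+(r₂-r₁)n₂}. Concretely: Σ_{n₁,n₂≥0} (n₁+2n₂) q^{n₁²+n₁n₂+n₂²} + Σ_{n₁,n₂≥0} (n₁-2n₂) q^{n₁²-n₁n₂+n₂²} = Σ_{n≥1} n q^{n²}. -/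

import Mathlib

set_option maxHeartbeats 1000000

private lemma summable_aux {r : ℝ} (hr0 : 0 ≤ r) (hr1 : r < 1) :
    Summable (fun p : ℕ × ℕ =>
      (((p.1 : ℝ) + 3) * r ^ (p.1 ^ 2)) * (((p.2 : ℝ) + 3) * r ^ (p.2 ^ 2))) := by
  have h1 : Summable (fun a : ℕ => ((a : ℝ) + 3) * r ^ (a ^ 2)) := by
    have hg : Summable (fun a : ℕ => ((a : ℝ) + 3) * r ^ a) := by
      have h2 : Summable (fun a : ℕ => (a : ℝ) ^ 1 * r ^ a) :=
        summable_pow_mul_geometric_of_norm_lt_one 1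
          (by rwa [Real.norm_eq_abs, abs_of_nonneg hr0])
      have h3 : Summable (fun a : ℕ => (3 : ℝ) * r ^ a) :=
        (summable_geometric_of_lt_one hr0 hr1).mul_left 3
      have h4 := h2.add h3
      refine h4.congr fun a => ?_
      simp only [pow_one]; ring
    refine Summable.of_nonneg_of_le (fun a => by positivity) (fun a => ?_) hg
    exact mul_le_mul_of_nonneg_left
      (pow_le_pow_of_le_one hr0 hr1.le (Nat.le_self_pow two_ne_zero a))
      (by positivity)
  exact h1.mul_of_nonneg h1 (fun a => by positivity) (fun a => by positivity)

private lemma summable_master {q : ℂ} (hq1 : ‖q‖ < 1)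
    (c : ℕ × ℕ → ℂ) (E : ℕ × ℕ → ℕ)
    (hc : ∀ p : ℕ × ℕ, ‖c p‖ ≤ ((p.1 : ℝ) + 3) * ((p.2 : ℝ) + 3))
    (hE : ∀ p : ℕ × ℕ, p.1 ^ 2 + p.2 ^ 2 ≤ E p) :
    Summable (fun p : ℕ × ℕ => c p * q ^ (E p)) := by
  have hq0 : (0 : ℝ) ≤ ‖q‖ := norm_nonneg q
  refine Summable.of_norm_bounded (summable_aux hq0 hq1) fun p => ?_
  have h1 : ‖c p * q ^ E p‖ = ‖c p‖ * ‖q‖ ^ E p := by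
    rw [norm_mul, norm_pow]
  rw [h1]
  have h2 : ‖q‖ ^ E p ≤ ‖q‖ ^ (p.1 ^ 2 + p.2 ^ 2) :=
    pow_le_pow_of_le_one hq0 hq1.le (hE p)
  calc ‖c p‖ * ‖q‖ ^ E p
      ≤ (((p.1 : ℝ) + 3) * ((p.2 : ℝ) + 3)) * ‖q‖ ^ (p.1 ^ 2 + p.2 ^ 2) := by
        apply mul_le_mul (hc p) h2 (by positivity) (by positivity)
    _ = (((p.1 : ℝ) + 3) * ‖q‖ ^ (p.1 ^ 2)) *
          (((p.2 : ℝ) + 3) * ‖q‖ ^ (p.2 ^ 2)) := by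
        rw [pow_add]; ring

private def Sset : Set (ℕ × ℕ) := {p : ℕ × ℕ | p.2 ≤ p.1}

private def eS : ℕ × ℕ ≃ Sset where
  toFun p := ⟨(p.1 + p.2, p.2), by simp [Sset]⟩
  invFun x := (x.1.1 - x.1.2, x.1.2)
  left_inv := by rintro ⟨a, b⟩; simp
  right_inv := by
    rintro ⟨⟨n1, n2⟩, h⟩
    have h' : n2 ≤ n1 := h
    apply Subtype.ext
    show (n1 - n2 + n2, n2) = (n1, n2)
    simp only [Prod.mk.injEq]
    refine ⟨?_, ?_⟩ <;> first | trivial | omega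

private def eSc : ℕ × ℕ ≃ ↥(Sset)ᶜ where
  toFun p := ⟨(p.2, p.1 + 1 + p.2), by simp [Sset]⟩
  invFun x := (x.1.2 - x.1.1 - 1, x.1.1)
  left_inv := by rintro ⟨a, b⟩; simp
  right_inv := by
    rintro ⟨⟨n1, n2⟩, h⟩
    have h' : ¬ n2 ≤ n1 := h
    apply Subtype.ext
    show (n1, n2 - n1 - 1 + 1 + n1) = (n1, n2)
    simp only [Prod.mk.injEq]
    refine ⟨?_, ?_⟩ <;> first | trivial | omega

private def Tset : Set (ℕ × ℕ) := {p : ℕ × ℕ | p.1 = 0}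

private def eT : ℕ ≃ Tset where
  toFun b := ⟨(0, b), rfl⟩
  invFun x := x.1.2
  left_inv := by intro b; simp
  right_inv := by
    rintro ⟨⟨n1, n2⟩, h⟩
    have h' : n1 = 0 := h
    apply Subtype.ext
    show (0, n2) = (n1, n2)
    simp only [Prod.mk.injEq]
    refine ⟨?_, ?_⟩ <;> first | trivial | omega

private def eTc : ℕ × ℕ ≃ ↥(Tset)ᶜ where
  toFun p := ⟨(p.1 + 1, p.2), by simp [Tset]⟩
  invFun x := (x.1.1 - 1, x.1.2)
  left_inv := by rintro ⟨a, b⟩; simp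
  right_inv := by
    rintro ⟨⟨n1, n2⟩, h⟩
    have h' : ¬ n1 = 0 := h
    apply Subtype.ext
    show (n1 - 1 + 1, n2) = (n1, n2)
    simp only [Prod.mk.injEq]
    refine ⟨?_, ?_⟩ <;> first | trivial | omega

theorem D00_identity (q : ℂ) (hq0 : 0 < ‖q‖) (hq1 : ‖q‖ < 1) :
    (∑' n : ℕ × ℕ, ((n.1 : ℂ) + 2 * n.2) *
        q ^ ((n.1 : ℤ) ^ 2 + (n.1 : ℤ) * n.2 + (n.2 : ℤ) ^ 2))
      + (∑' n : ℕ × ℕ, ((n.1 : ℂ) - 2 * n.2) *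
          q ^ ((n.1 : ℤ) ^ 2 - (n.1 : ℤ) * n.2 + (n.2 : ℤ) ^ 2))
    = ∑' n : ℕ, (n : ℂ) * q ^ ((n : ℤ) ^ 2) := by
  -- summability of the Q⁺-type series
  have sG : Summable (fun p : ℕ × ℕ => ((p.1 : ℂ) - p.2) *
      q ^ (p.1 ^ 2 + p.1 * p.2 + p.2 ^ 2)) := by
    apply summable_master hq1 _ _ ?_ ?_
    · intro p
      have h : ((p.1 : ℂ) - p.2) = (((p.1 : ℝ) - p.2 : ℝ) : ℂ) := by push_cast; ring
      rw [h, Complex.norm_real, Real.norm_eq_abs, abs_le]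
      constructor <;> nlinarith [Nat.cast_nonneg (α := ℝ) p.1, Nat.cast_nonneg (α := ℝ) p.2]
    · intro p; nlinarith [Nat.zero_le (p.1 * p.2)]
  have sH : Summable (fun p : ℕ × ℕ => (2 * ((p.1 : ℂ) + 1) + p.2) *
      q ^ ((p.1 + 1) ^ 2 + (p.1 + 1) * p.2 + p.2 ^ 2)) := by
    apply summable_master hq1 _ _ ?_ ?_
    · intro p
      have h : (2 * ((p.1 : ℂ) + 1) + p.2) = (((2 * ((p.1:ℝ)+1) + p.2) : ℝ) : ℂ) := by
        push_cast; ring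
      rw [h, Complex.norm_real, Real.norm_eq_abs, abs_of_nonneg (by positivity)]
      nlinarith [Nat.cast_nonneg (α := ℝ) p.1, Nat.cast_nonneg (α := ℝ) p.2]
    · intro p; nlinarith [Nat.zero_le ((p.1 + 1) * p.2), Nat.zero_le p.1]
  have sF : Summable (fun p : ℕ × ℕ => (2 * (p.1 : ℂ) + p.2) *
      q ^ (p.1 ^ 2 + p.1 * p.2 + p.2 ^ 2)) := by
    apply summable_master hq1 _ _ ?_ ?_
    · intro p
      have h : (2 * (p.1 : ℂ) + p.2) = (((2 * (p.1:ℝ) + p.2) : ℝ) : ℂ) := by push_cast; ring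
      rw [h, Complex.norm_real, Real.norm_eq_abs, abs_of_nonneg (by positivity)]
      nlinarith [Nat.cast_nonneg (α := ℝ) p.1, Nat.cast_nonneg (α := ℝ) p.2]
    · intro p; nlinarith [Nat.zero_le (p.1 * p.2)]
  have s1 : Summable (fun p : ℕ × ℕ => ((p.1 : ℂ) + 2 * p.2) *
      q ^ (p.1 ^ 2 + p.1 * p.2 + p.2 ^ 2)) := by
    apply summable_master hq1 _ _ ?_ ?_
    · intro p
      have h : ((p.1 : ℂ) + 2 * p.2) = ((((p.1:ℝ) + 2 * p.2) : ℝ) : ℂ) := by push_cast; ring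
      rw [h, Complex.norm_real, Real.norm_eq_abs, abs_of_nonneg (by positivity)]
      nlinarith [Nat.cast_nonneg (α := ℝ) p.1, Nat.cast_nonneg (α := ℝ) p.2]
    · intro p; nlinarith [Nat.zero_le (p.1 * p.2)]
  -- first sum with natural exponents
  have e1 : (∑' n : ℕ × ℕ, ((n.1 : ℂ) + 2 * n.2) *
        q ^ ((n.1 : ℤ) ^ 2 + (n.1 : ℤ) * n.2 + (n.2 : ℤ) ^ 2))
      = ∑' p : ℕ × ℕ, ((p.1 : ℂ) + 2 * p.2) * q ^ (p.1 ^ 2 + p.1 * p.2 + p.2 ^ 2) := by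
    refine tsum_congr fun p => ?_
    have h : ((p.1 : ℤ) ^ 2 + (p.1 : ℤ) * p.2 + (p.2 : ℤ) ^ 2)
        = ((p.1 ^ 2 + p.1 * p.2 + p.2 ^ 2 : ℕ) : ℤ) := by push_cast; ring
    rw [h, zpow_natCast]
  -- the composition identities for the diagonal split
  have hcompS : ∀ p : ℕ × ℕ,
      (((eS p : ℕ × ℕ).1 : ℂ) - 2 * (eS p : ℕ × ℕ).2) *
        q ^ (((eS p : ℕ × ℕ).1 : ℤ) ^ 2 - ((eS p : ℕ × ℕ).1 : ℤ) * (eS p : ℕ × ℕ).2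
            + ((eS p : ℕ × ℕ).2 : ℤ) ^ 2)
      = ((p.1 : ℂ) - p.2) * q ^ (p.1 ^ 2 + p.1 * p.2 + p.2 ^ 2) := by
    intro p
    obtain ⟨a, b⟩ := p
    simp only [eS, Equiv.coe_fn_mk]
    have hexp : (((a + b : ℕ) : ℤ) ^ 2 - ((a + b : ℕ) : ℤ) * (b : ℕ) + ((b : ℕ) : ℤ) ^ 2)
        = ((a ^ 2 + a * b + b ^ 2 : ℕ) : ℤ) := by push_cast; ring
    rw [hexp, zpow_natCast]
    push_cast
    ring
  have hcompSc : ∀ p : ℕ × ℕ,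
      (((eSc p : ℕ × ℕ).1 : ℂ) - 2 * (eSc p : ℕ × ℕ).2) *
        q ^ (((eSc p : ℕ × ℕ).1 : ℤ) ^ 2 - ((eSc p : ℕ × ℕ).1 : ℤ) * (eSc p : ℕ × ℕ).2
            + ((eSc p : ℕ × ℕ).2 : ℤ) ^ 2)
      = -((2 * ((p.1 : ℂ) + 1) + p.2) *
          q ^ ((p.1 + 1) ^ 2 + (p.1 + 1) * p.2 + p.2 ^ 2)) := by
    intro p
    obtain ⟨a, b⟩ := p
    simp only [eSc, Equiv.coe_fn_mk]
    have hexp : (((b : ℕ) : ℤ) ^ 2 - ((b : ℕ) : ℤ) * ((a + 1 + b : ℕ) : ℤ)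
          + ((a + 1 + b : ℕ) : ℤ) ^ 2)
        = (((a + 1) ^ 2 + (a + 1) * b + b ^ 2 : ℕ) : ℤ) := by push_cast; ring
    rw [hexp, zpow_natCast, neg_mul_eq_neg_mul]
    push_cast
    ring
  -- split the second sum
  have e2 : (∑' n : ℕ × ℕ, ((n.1 : ℂ) - 2 * n.2) *
        q ^ ((n.1 : ℤ) ^ 2 - (n.1 : ℤ) * n.2 + (n.2 : ℤ) ^ 2))
      = (∑' p : ℕ × ℕ, ((p.1 : ℂ) - p.2) * q ^ (p.1 ^ 2 + p.1 * p.2 + p.2 ^ 2))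
        - ∑' p : ℕ × ℕ, (2 * ((p.1 : ℂ) + 1) + p.2) *
            q ^ ((p.1 + 1) ^ 2 + (p.1 + 1) * p.2 + p.2 ^ 2) := by
    have sumS : Summable ((fun n : ℕ × ℕ => ((n.1 : ℂ) - 2 * n.2) *
        q ^ ((n.1 : ℤ) ^ 2 - (n.1 : ℤ) * n.2 + (n.2 : ℤ) ^ 2)) ∘ ((↑) : Sset → ℕ × ℕ)) := by
      rw [← eS.summable_iff]
      exact sG.congr fun p => (hcompS p).symm
    have sumSc : Summable ((fun n : ℕ × ℕ => ((n.1 : ℂ) - 2 * n.2) *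
        q ^ ((n.1 : ℤ) ^ 2 - (n.1 : ℤ) * n.2 + (n.2 : ℤ) ^ 2)) ∘ ((↑) : ↥(Sset)ᶜ → ℕ × ℕ)) := by
      rw [← eSc.summable_iff]
      exact sH.neg.congr fun p => (hcompSc p).symm
    rw [← Summable.tsum_add_tsum_compl (s := Sset) sumS sumSc]
    have tS : (∑' x : Sset, ((((x : ℕ × ℕ)).1 : ℂ) - 2 * ((x : ℕ × ℕ)).2) *
          q ^ ((((x : ℕ × ℕ)).1 : ℤ) ^ 2 - (((x : ℕ × ℕ)).1 : ℤ) * ((x : ℕ × ℕ)).2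
              + (((x : ℕ × ℕ)).2 : ℤ) ^ 2))
        = ∑' p : ℕ × ℕ, ((p.1 : ℂ) - p.2) * q ^ (p.1 ^ 2 + p.1 * p.2 + p.2 ^ 2) := by
      rw [← eS.tsum_eq]
      exact tsum_congr hcompS
    have tSc : (∑' x : ↥(Sset)ᶜ, ((((x : ℕ × ℕ)).1 : ℂ) - 2 * ((x : ℕ × ℕ)).2) *
          q ^ ((((x : ℕ × ℕ)).1 : ℤ) ^ 2 - (((x : ℕ × ℕ)).1 : ℤ) * ((x : ℕ × ℕ)).2
              + (((x : ℕ × ℕ)).2 : ℤ) ^ 2))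
        = -∑' p : ℕ × ℕ, (2 * ((p.1 : ℂ) + 1) + p.2) *
            q ^ ((p.1 + 1) ^ 2 + (p.1 + 1) * p.2 + p.2 ^ 2) := by
      rw [← eSc.tsum_eq]
      rw [tsum_congr hcompSc, tsum_neg]
    rw [tS, tSc]
    ring
  -- recombine the two Q⁺ sums
  have e3 : (∑' p : ℕ × ℕ, ((p.1 : ℂ) + 2 * p.2) * q ^ (p.1 ^ 2 + p.1 * p.2 + p.2 ^ 2))
      + (∑' p : ℕ × ℕ, ((p.1 : ℂ) - p.2) * q ^ (p.1 ^ 2 + p.1 * p.2 + p.2 ^ 2))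
      = ∑' p : ℕ × ℕ, (2 * (p.1 : ℂ) + p.2) * q ^ (p.1 ^ 2 + p.1 * p.2 + p.2 ^ 2) := by
    rw [← Summable.tsum_add s1 sG]
    exact tsum_congr fun p => by ring
  -- peel the first-coordinate-zero slice off F
  have hcompT : ∀ b : ℕ,
      (2 * ((eT b : ℕ × ℕ).1 : ℂ) + (eT b : ℕ × ℕ).2) *
        q ^ ((eT b : ℕ × ℕ).1 ^ 2 + (eT b : ℕ × ℕ).1 * (eT b : ℕ × ℕ).2 + (eT b : ℕ × ℕ).2 ^ 2)
      = (b : ℂ) * q ^ (b ^ 2) := by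
    intro b
    simp only [eT, Equiv.coe_fn_mk]
    norm_num
  have hcompTc : ∀ p : ℕ × ℕ,
      (2 * ((eTc p : ℕ × ℕ).1 : ℂ) + (eTc p : ℕ × ℕ).2) *
        q ^ ((eTc p : ℕ × ℕ).1 ^ 2 + (eTc p : ℕ × ℕ).1 * (eTc p : ℕ × ℕ).2
            + (eTc p : ℕ × ℕ).2 ^ 2)
      = (2 * ((p.1 : ℂ) + 1) + p.2) * q ^ ((p.1 + 1) ^ 2 + (p.1 + 1) * p.2 + p.2 ^ 2) := by
    intro p
    obtain ⟨a, b⟩ := p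
    simp only [eTc, Equiv.coe_fn_mk]
    push_cast
    ring
  have e4 : (∑' p : ℕ × ℕ, (2 * (p.1 : ℂ) + p.2) * q ^ (p.1 ^ 2 + p.1 * p.2 + p.2 ^ 2))
      = (∑' b : ℕ, (b : ℂ) * q ^ (b ^ 2))
        + ∑' p : ℕ × ℕ, (2 * ((p.1 : ℂ) + 1) + p.2) *
            q ^ ((p.1 + 1) ^ 2 + (p.1 + 1) * p.2 + p.2 ^ 2) := by
    have sumT : Summable ((fun p : ℕ × ℕ => (2 * (p.1 : ℂ) + p.2) *
        q ^ (p.1 ^ 2 + p.1 * p.2 + p.2 ^ 2)) ∘ ((↑) : Tset → ℕ × ℕ)) := by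
      rw [← eT.summable_iff]
      have hinj : Function.Injective (fun b : ℕ => ((0, b) : ℕ × ℕ)) := by
        intro x y h; simpa using h
      have h := sF.comp_injective hinj
      exact h.congr fun b => rfl
    have sumTc : Summable ((fun p : ℕ × ℕ => (2 * (p.1 : ℂ) + p.2) *
        q ^ (p.1 ^ 2 + p.1 * p.2 + p.2 ^ 2)) ∘ ((↑) : ↥(Tset)ᶜ → ℕ × ℕ)) := by
      rw [← eTc.summable_iff]
      exact sH.congr fun p => (hcompTc p).symm
    rw [← Summable.tsum_add_tsum_compl (s := Tset) sumT sumTc]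
    congr 1
    · rw [← eT.tsum_eq]
      exact tsum_congr hcompT
    · rw [← eTc.tsum_eq]
      exact tsum_congr hcompTc
  -- RHS with natural exponents
  have e5 : (∑' n : ℕ, (n : ℂ) * q ^ ((n : ℤ) ^ 2)) = ∑' b : ℕ, (b : ℂ) * q ^ (b ^ 2) := by
    refine tsum_congr fun n => ?_
    have h : ((n : ℤ) ^ 2) = ((n ^ 2 : ℕ) : ℤ) := by push_cast; ring
    rw [h, zpow_natCast]
  rw [e1, e2, e5]
  linear_combination e3 + e4
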